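/- Suppose the unit-demand buyers' values {v_q(g)} are generic, p is a minimal Walrasian price vector, and μ is a corresponding equilibrium allocation. Then every node of the swap graph defined with respect to (p,μ) has in-degree at most 1; that is, for every good g there is at most one buyer q with μ(q) ≠ g and g ∈ Dem_q(p). -/

import Mathlib

open Finset

noncomputable section

/-- Utility of an option for a unit-demand buyer: `none` means buying nothing. -/
def utilU {m : ℕ} (v p : Fin m → ℝ) : Option (Fin m) → ℝ
  | none => 0
  | some g => v g - p g

/-- Value of an option (the value of the good, or `0` for the empty option). -/
def vOpt {n m : ℕ} (v : Fin n → Fin m → ℝ) (q : Fin n) : Option (Fin m) → ℝ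
  | none => 0
  | some g => v q g

/-- Demand correspondence: the utility-maximizing options at prices `p`. -/
def DemU {m : ℕ} (v p : Fin m → ℝ) : Set (Option (Fin m)) :=
  {o | ∀ o', utilU v p o' ≤ utilU v p o}

/-- Walrasian equilibrium for unit-demand buyers with supplies `s`. -/
def IsWEU {n m : ℕ} (s : Fin m → ℕ) (v : Fin n → Fin m → ℝ)
    (p : Fin m → ℝ) (μ : Fin n → Option (Fin m)) : Prop :=
  (∀ g, (univ.filter fun q => μ q = some g).card ≤ s g) ∧
  (∀ q, μ q ∈ DemU (v q) p) ∧
  (∀ g, (univ.filter fun q => μ q = some g).card < s g → p g = 0)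

/-- `p` is a minimal Walrasian equilibrium price vector. -/
def IsMinimalWEPriceU {n m : ℕ} (s : Fin m → ℕ) (v : Fin n → Fin m → ℝ)
    (p : Fin m → ℝ) : Prop :=
  (∀ g, 0 ≤ p g) ∧ (∃ μ, IsWEU s v p μ) ∧
  ∀ p' : Fin m → ℝ, (∀ g, 0 ≤ p' g) → (∃ μ, IsWEU s v p' μ) → ∀ g, p g ≤ p' g

/-- Genericity: the values are linearly independent over `{-1,0,1}`. -/
def GenericU {n m : ℕ} (v : Fin n → Fin m → ℝ) : Prop :=
  ∀ α : Fin n → Fin m → ℤ,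
    (∀ q g, α q g = -1 ∨ α q g = 0 ∨ α q g = 1) →
    (∑ q, ∑ g, (α q g : ℝ) * v q g) = 0 →
    ∀ q g, α q g = 0

/-- Edge of the swap graph: a directed edge from node `a` to node `b` (nodes are
`some`-goods or the null node `none`), witnessed by a buyer allocated `a` who also
demands the good `b`.  There are no edges into the null node. -/
def SwapEdgeU {n m : ℕ} (v : Fin n → Fin m → ℝ) (p : Fin m → ℝ)
    (μ : Fin n → Option (Fin m)) (a b : Option (Fin m)) : Prop :=
  ∃ (q : Fin n) (g : Fin m), b = some g ∧ μ q = a ∧ b ∈ DemU (v q) p ∧ a ≠ b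

namespace Stmt5Aux

variable {n m : ℕ}

/-- Price of an option. -/
def Pf (p : Fin m → ℝ) : Option (Fin m) → ℝ
  | none => 0
  | some h => p h

/-- Value of an option for a single buyer's valuation. -/
def Vf (vq : Fin m → ℝ) : Option (Fin m) → ℝ
  | none => 0
  | some h => vq h

lemma utilU_eq (vq p : Fin m → ℝ) (o : Option (Fin m)) :
    utilU vq p o = Vf vq o - Pf p o := by
  cases o <;> simp [utilU, Vf, Pf]

/-- A step of a walk in the swap graph: (witness buyer, source node, target good). -/
abbrev Step (n m : ℕ) := Fin n × Option (Fin m) × Fin m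

/-- Well-formed walk from node `a` to node `c` along steps `l`. -/
def WF (v : Fin n → Fin m → ℝ) (p : Fin m → ℝ) (μ : Fin n → Option (Fin m)) :
    Option (Fin m) → Option (Fin m) → List (Step n m) → Prop
  | a, c, [] => a = c
  | a, c, st :: l => st.2.1 = a ∧ μ st.1 = a ∧ some st.2.2 ∈ DemU (v st.1) p ∧
      a ≠ some st.2.2 ∧ WF v p μ (some st.2.2) c l

def tgt (st : Step n m) : Option (Fin m) := some st.2.2

def nodes (a : Option (Fin m)) (l : List (Step n m)) : List (Option (Fin m)) :=
  a :: l.map tgt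

def sources (l : List (Step n m)) : List (Option (Fin m)) := l.map (fun st => st.2.1)

/-- Coefficient function of a walk. -/
def coef (l : List (Step n m)) (q : Fin n) (g : Fin m) : ℤ :=
  (l.map (fun st => (if st.1 = q ∧ st.2.2 = g then (1:ℤ) else 0)
      - (if st.1 = q ∧ st.2.1 = some g then 1 else 0))).sum

variable {v : Fin n → Fin m → ℝ} {p : Fin m → ℝ} {μ : Fin n → Option (Fin m)}

lemma coef_nil (q : Fin n) (g : Fin m) : coef ([] : List (Step n m)) q g = 0 := rfl

lemma coef_cons (st : Step n m) (l : List (Step n m)) (q : Fin n) (g : Fin m) :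
    coef (st :: l) q g = ((if st.1 = q ∧ st.2.2 = g then (1:ℤ) else 0)
      - (if st.1 = q ∧ st.2.1 = some g then 1 else 0)) + coef l q g := by
  simp [coef]

lemma coef_append (l l' : List (Step n m)) (q : Fin n) (g : Fin m) :
    coef (l ++ l') q g = coef l q g + coef l' q g := by
  simp [coef]

lemma WF_append {a b c : Option (Fin m)} {l l' : List (Step n m)}
    (h : WF v p μ a b l) (h' : WF v p μ b c l') : WF v p μ a c (l ++ l') := by
  induction l generalizing a with
  | nil => simpa [WF] using (h ▸ h' : _)
  | cons st t ih =>
      obtain ⟨h1, h2, h3, h4, h5⟩ := h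
      exact ⟨h1, h2, h3, h4, ih h5⟩

lemma WF_facts {a c : Option (Fin m)} {l : List (Step n m)} (h : WF v p μ a c l) :
    ∀ st ∈ l, μ st.1 = st.2.1 ∧ st.2.1 ≠ some st.2.2 ∧ some st.2.2 ∈ DemU (v st.1) p := by
  induction l generalizing a with
  | nil => intro st hst; simp at hst
  | cons st' t ih =>
      obtain ⟨h1, h2, h3, h4, h5⟩ := h
      intro st hst
      rcases List.mem_cons.1 hst with rfl | hst
      · exact ⟨h2.trans h1.symm, h1 ▸ h4, h3⟩
      · exact ih h5 st hst

lemma sources_append_eq_nodes {a c : Option (Fin m)} {l : List (Step n m)}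
    (h : WF v p μ a c l) : sources l ++ [c] = nodes a l := by
  induction l generalizing a with
  | nil => simp [sources, nodes, h.symm]  -- h : a = c
  | cons st t ih =>
      obtain ⟨h1, h2, h3, h4, h5⟩ := h
      have := ih h5
      simp only [sources, nodes, List.map_cons, List.cons_append, h1]
      simpa [sources, nodes, tgt] using this

lemma sum_step (q0 : Fin n) (a0 : Option (Fin m)) (g0 : Fin m) :
    ∑ q, ∑ g, (((if q0 = q ∧ g0 = g then (1:ℤ) else 0)
      - (if q0 = q ∧ a0 = some g then 1 else 0) : ℤ) : ℝ) * v q g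
      = Vf (v q0) (some g0) - Vf (v q0) a0 := by
  have hc : ∀ q g, (((if q0 = q ∧ g0 = g then (1:ℤ) else 0)
      - (if q0 = q ∧ a0 = some g then 1 else 0) : ℤ) : ℝ) * v q g
      = (if q0 = q ∧ g0 = g then (1:ℝ) else 0) * v q g
        - (if q0 = q ∧ a0 = some g then (1:ℝ) else 0) * v q g := by
    intro q g; split_ifs <;> push_cast <;> ring
  simp only [hc, Finset.sum_sub_distrib]
  cases a0 with
  | none => simp [Vf, ite_and, ite_mul, Finset.sum_ite_eq]
  | some h => simp [Vf, ite_and, ite_mul, Finset.sum_ite_eq]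

/-- Telescoping: the coefficient-weighted value sum along a walk equals p(c) - p(a). -/
lemma sum_coef (hDem : ∀ q, μ q ∈ DemU (v q) p) :
    ∀ (l : List (Step n m)) (a c : Option (Fin m)), WF v p μ a c l →
      ∑ q, ∑ g, (coef l q g : ℝ) * v q g = Pf p c - Pf p a := by
  intro l
  induction l with
  | nil =>
      intro a c h
      simp [WF] at h
      simp [coef_nil, h]
  | cons st t ih =>
      intro a c h
      obtain ⟨h1, h2, h3, h4, h5⟩ := h
      have key : Vf (v st.1) (some st.2.2) - Vf (v st.1) a = Pf p (some st.2.2) - Pf p a := by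
        have hub : utilU (v st.1) p (some st.2.2) ≤ utilU (v st.1) p a := by
          have := hDem st.1 (some st.2.2); rw [h2] at this; exact this
        have hlb : utilU (v st.1) p a ≤ utilU (v st.1) p (some st.2.2) := h3 a
        have heq : utilU (v st.1) p a = utilU (v st.1) p (some st.2.2) :=
          le_antisymm hlb hub
        rw [utilU_eq, utilU_eq] at heq
        linarith
      calc ∑ q, ∑ g, (coef (st :: t) q g : ℝ) * v q g
          = ∑ q, ∑ g, ((((if st.1 = q ∧ st.2.2 = g then (1:ℤ) else 0)
              - (if st.1 = q ∧ st.2.1 = some g then 1 else 0) : ℤ) : ℝ) * v q g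
              + (coef t q g : ℝ) * v q g) := by
            refine Finset.sum_congr rfl fun q _ => Finset.sum_congr rfl fun g _ => ?_
            rw [coef_cons]
            push_cast
            ring
        _ = (Vf (v st.1) (some st.2.2) - Vf (v st.1) st.2.1)
              + (Pf p c - Pf p (some st.2.2)) := by
            rw [← sum_step st.1 st.2.1 st.2.2]
            rw [← ih (some st.2.2) c h5]
            simp [Finset.sum_add_distrib]
        _ = Pf p c - Pf p a := by rw [h1]; linarith


lemma coef_zero {l : List (Step n m)} {q : Fin n} (h : ∀ st ∈ l, st.1 ≠ q) (g : Fin m) :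
    coef l q g = 0 := by
  induction l with
  | nil => rfl
  | cons st t ih =>
      rw [coef_cons]
      have h1 := h st (List.mem_cons_self)
      have : ∀ st' ∈ t, st'.1 ≠ q := fun st' hst' => h st' (List.mem_cons_of_mem _ hst')
      simp [h1, ih this]

lemma coef_struct {a c : Option (Fin m)} {l : List (Step n m)} (h : WF v p μ a c l)
    (hnd : (sources l).Nodup) (q : Fin n) :
    (∀ g, coef l q g = 0) ∨
    ∃ t : Fin m, (q, μ q, t) ∈ l ∧ μ q ≠ some t ∧
      ∀ g, coef l q g = (if g = t then 1 else 0) - (if μ q = some g then 1 else 0) := by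
  induction l generalizing a with
  | nil => left; intro g; rfl
  | cons st t ih =>
      obtain ⟨h1, h2, h3, h4, h5⟩ := h
      rw [sources, List.map_cons, List.nodup_cons] at hnd
      obtain ⟨hnotin, hnd'⟩ := hnd
      by_cases hq : st.1 = q
      · right
        subst hq
        have hμ : μ st.1 = st.2.1 := by rw [h2, h1]
        have hz : ∀ st' ∈ t, st'.1 ≠ st.1 := by
          intro st' hst' he
          have hf := WF_facts h5 st' hst'
          apply hnotin
          have heq : st'.2.1 = st.2.1 := by rw [← hf.1, he, hμ]
          rw [← heq]
          exact List.mem_map_of_mem hst'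
        refine ⟨st.2.2, ?_, ?_, ?_⟩
        · have : (st.1, μ st.1, st.2.2) = st := by rw [hμ]
          rw [this]; exact List.mem_cons_self
        · rw [hμ, h1]; exact h4
        · intro g
          rw [coef_cons, coef_zero hz g, hμ]
          by_cases hg : g = st.2.2 <;> simp [hg, eq_comm]
      · have : coef (st :: t) q = coef t q := by
          funext g; rw [coef_cons]; simp [hq]
        rw [this]
        rcases ih h5 hnd' with h0 | ⟨tt, hmem, hne, hfor⟩
        · exact Or.inl h0
        · exact Or.inr ⟨tt, List.mem_cons_of_mem _ hmem, hne, hfor⟩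


section Market
variable {n m : ℕ} {v : Fin n → Fin m → ℝ} {p : Fin m → ℝ} {μ : Fin n → Option (Fin m)}
  {s : Fin m → ℕ}

/-- Minimality implies every nonempty set of positively-priced goods has an
incoming swap edge from outside the set. -/
lemma min_edge (hWE : IsWEU s v p μ) (hmin : IsMinimalWEPriceU s v p)
    (S : Finset (Fin m)) (hS : S.Nonempty) (hpos : ∀ h ∈ S, 0 < p h) :
    ∃ (q : Fin n) (h : Fin m), h ∈ S ∧ (∀ h' ∈ S, μ q ≠ some h') ∧
      some h ∈ DemU (v q) p := by
  classical
  by_contra hcon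
  push_neg at hcon
  -- strict gaps for outside buyers
  have hgap : ∀ q : Fin n, (∀ h' ∈ S, μ q ≠ some h') → ∀ h ∈ S,
      utilU (v q) p (some h) < utilU (v q) p (μ q) := by
    intro q hout h hh
    have hub : utilU (v q) p (some h) ≤ utilU (v q) p (μ q) := hWE.2.1 q (some h)
    rcases lt_or_eq_of_le hub with hlt | heq
    · exact hlt
    · exfalso
      apply hcon q h hh hout
      intro o'
      calc utilU (v q) p o' ≤ utilU (v q) p (μ q) := hWE.2.1 q o'
        _ = utilU (v q) p (some h) := heq.symm
  set pairs : Finset (Fin n × Fin m) :=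
    (univ.filter fun q => ∀ h' ∈ S, μ q ≠ some h') ×ˢ S with hpairs
  set F : Finset ℝ := S.image p ∪
    pairs.image (fun qh => utilU (v qh.1) p (μ qh.1) - utilU (v qh.1) p (some qh.2)) with hF
  have hFne : F.Nonempty := by
    obtain ⟨h0, hh0⟩ := hS
    exact ⟨p h0, by simp [hF, Finset.mem_union]; exact Or.inl ⟨h0, hh0, rfl⟩⟩
  set ε := F.min' hFne with hε
  have hεpos : 0 < ε := by
    rw [hε, Finset.lt_min'_iff]
    intro b hb
    rw [hF, Finset.mem_union] at hb
    rcases hb with hb | hb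
    · obtain ⟨h, hh, rfl⟩ := Finset.mem_image.1 hb
      exact hpos h hh
    · obtain ⟨⟨q, h⟩, hqh, rfl⟩ := Finset.mem_image.1 hb
      rw [hpairs, Finset.mem_product, Finset.mem_filter] at hqh
      have := hgap q hqh.1.2 h hqh.2
      linarith
  have hεp : ∀ h ∈ S, ε ≤ p h := by
    intro h hh
    exact Finset.min'_le _ _ (by rw [hF, Finset.mem_union]; exact Or.inl (Finset.mem_image.2 ⟨h, hh, rfl⟩))
  have hεgap : ∀ q : Fin n, (∀ h' ∈ S, μ q ≠ some h') → ∀ h ∈ S,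
      ε ≤ utilU (v q) p (μ q) - utilU (v q) p (some h) := by
    intro q hout h hh
    refine Finset.min'_le _ _ ?_
    rw [hF, Finset.mem_union]
    right
    refine Finset.mem_image.2 ⟨(q, h), ?_, rfl⟩
    rw [hpairs, Finset.mem_product, Finset.mem_filter]
    exact ⟨⟨Finset.mem_univ q, hout⟩, hh⟩
  set p' : Fin m → ℝ := fun h => if h ∈ S then p h - ε else p h with hp'
  have hp'nonneg : ∀ h, 0 ≤ p' h := by
    intro h
    rw [hp']
    by_cases hh : h ∈ S
    · simp only [hh, if_true]
      have := hεp h hh; linarith [hpos h hh]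
    · simp only [hh, if_false]; exact hmin.1 h
  -- utilities under p'
  have hutil_none : ∀ q : Fin n, utilU (v q) p' none = utilU (v q) p none := fun q => rfl
  have hutil_in : ∀ (q : Fin n) (h : Fin m), h ∈ S →
      utilU (v q) p' (some h) = utilU (v q) p (some h) + ε := by
    intro q h hh; simp [utilU, hp', hh]; ring
  have hutil_out : ∀ (q : Fin n) (h : Fin m), h ∉ S →
      utilU (v q) p' (some h) = utilU (v q) p (some h) := by
    intro q h hh; simp [utilU, hp', hh]
  have hutil_le : ∀ (q : Fin n) (o : Option (Fin m)),
      utilU (v q) p' o ≤ utilU (v q) p o + ε := by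
    intro q o
    cases o with
    | none => rw [hutil_none]; linarith
    | some h =>
        by_cases hh : h ∈ S
        · rw [hutil_in q h hh]
        · rw [hutil_out q h hh]; linarith
  have hWE' : IsWEU s v p' μ := by
    refine ⟨hWE.1, ?_, ?_⟩
    · intro q
      intro o'
      by_cases hout : ∀ h' ∈ S, μ q ≠ some h'
      · have hμeq : utilU (v q) p' (μ q) = utilU (v q) p (μ q) := by
          cases hμq : μ q with
          | none => rfl
          | some h' =>
              have : h' ∉ S := fun hh => hout h' hh hμq
              exact hutil_out q h' this
        rw [hμeq]
        cases o' with
        | none => exact hWE.2.1 q none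
        | some h =>
            by_cases hh : h ∈ S
            · rw [hutil_in q h hh]
              have := hεgap q hout h hh
              linarith
            · rw [hutil_out q h hh]; exact hWE.2.1 q (some h)
      · push_neg at hout
        obtain ⟨h0, hh0, hμq⟩ := hout
        have hμeq : utilU (v q) p' (μ q) = utilU (v q) p (μ q) + ε := by
          rw [hμq]; exact hutil_in q h0 hh0
        rw [hμeq]
        calc utilU (v q) p' o' ≤ utilU (v q) p o' + ε := hutil_le q o'
          _ ≤ utilU (v q) p (μ q) + ε := by linarith [hWE.2.1 q o']
    · intro h hlt
      have h0 := hWE.2.2 h hlt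
      by_cases hh : h ∈ S
      · exact absurd h0 (ne_of_gt (hpos h hh))
      · rw [hp']; simp only [hh, if_false]; exact h0
  obtain ⟨h0, hh0⟩ := hS
  have := hmin.2.2 p' hp'nonneg ⟨μ, hWE'⟩ h0
  rw [hp'] at this
  simp only [hh0, if_true] at this
  linarith

end Market
section Reach
variable {n m : ℕ} {v : Fin n → Fin m → ℝ} {p : Fin m → ℝ} {μ : Fin n → Option (Fin m)}
  {s : Fin m → ℕ}

lemma WF_prefix : ∀ (l : List (Step n m)) (a c : Option (Fin m)), WF v p μ a c l →
    ∀ x ∈ nodes a l, ∃ l1, WF v p μ a x l1 ∧ (nodes a l1).Sublist (nodes a l) := by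
  intro l
  induction l with
  | nil =>
      intro a c h x hx
      simp [nodes] at hx
      subst hx
      exact ⟨[], rfl, List.Sublist.refl _⟩
  | cons st t ih =>
      intro a c h x hx
      obtain ⟨h1, h2, h3, h4, h5⟩ := h
      have hnodes : nodes a (st :: t) = a :: nodes (some st.2.2) t := by
        simp [nodes, tgt]
      rw [hnodes] at hx
      rcases List.mem_cons.1 hx with rfl | hx
      · exact ⟨[], rfl, by rw [hnodes]; exact (List.singleton_sublist.2 (List.mem_cons_self))⟩
      · obtain ⟨l1, hWF1, hsub⟩ := ih (some st.2.2) c h5 x hx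
        refine ⟨st :: l1, ⟨h1, h2, h3, h4, hWF1⟩, ?_⟩
        have : nodes a (st :: l1) = a :: nodes (some st.2.2) l1 := by simp [nodes, tgt]
        rw [this, hnodes]
        exact hsub.cons₂ a

lemma reach (hWE : IsWEU s v p μ) (hmin : IsMinimalWEPriceU s v p) (h : Fin m) :
    ∃ (o0 : Option (Fin m)) (l : List (Step n m)), Pf p o0 = 0 ∧
      WF v p μ o0 (some h) l ∧ (nodes o0 l).Nodup := by
  classical
  set R : Fin m → Prop := fun h => ∃ o0 l, Pf p o0 = 0 ∧ WF v p μ o0 (some h) l ∧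
    (nodes o0 l).Nodup with hR
  set T : Finset (Fin m) := univ.filter (fun h => 0 < p h ∧ ¬ R h) with hT
  have hTempty : T = ∅ := by
    by_contra hne
    have hTne : T.Nonempty := Finset.nonempty_iff_ne_empty.2 hne
    have hTpos : ∀ h' ∈ T, 0 < p h' := by
      intro h' hh'
      exact ((Finset.mem_filter.1 hh').2).1
    obtain ⟨q, b, hbT, hout, hdem⟩ := min_edge hWE hmin T hTne hTpos
    apply ((Finset.mem_filter.1 hbT).2).2
    have hab : μ q ≠ some b := hout b hbT
    cases hμ : μ q with
    | none =>
        refine ⟨none, [(q, none, b)], rfl, ⟨rfl, hμ, hdem, by simp, rfl⟩, ?_⟩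
        simp [nodes, tgt]
    | some h' =>
        have hab' : some h' ≠ some b := hμ ▸ hab
        by_cases hph' : p h' = 0
        · refine ⟨some h', [(q, some h', b)], hph', ⟨rfl, hμ, hdem, hab', rfl⟩, ?_⟩
          simp [nodes, tgt, hab']
        · have hh'pos : 0 < p h' := lt_of_le_of_ne (hmin.1 h') (Ne.symm hph')
          have hh'R : R h' := by
            by_contra hnR
            exact hout h' (Finset.mem_filter.2 ⟨Finset.mem_univ _, hh'pos, hnR⟩) hμ
          obtain ⟨o0, l', hP0, hWF', hnd⟩ := hh'R
          by_cases hbmem : some b ∈ nodes o0 l'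
          · obtain ⟨l1, hWF1, hsub⟩ := WF_prefix l' o0 (some h') hWF' (some b) hbmem
            exact ⟨o0, l1, hP0, hWF1, hnd.sublist hsub⟩
          · refine ⟨o0, l' ++ [(q, some h', b)], hP0,
              WF_append hWF' ⟨rfl, hμ, hdem, hab', rfl⟩, ?_⟩
            have heq : nodes o0 (l' ++ [(q, some h', b)]) = nodes o0 l' ++ [some b] := by
              simp [nodes, tgt]
            rw [heq]
            simp [List.nodup_append, hnd, hbmem]
            intro a ha he; exact hbmem (he ▸ ha)
  by_cases hp : p h = 0
  · exact ⟨some h, [], hp, rfl, by simp [nodes]⟩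
  · have hpos : 0 < p h := lt_of_le_of_ne (hmin.1 h) (Ne.symm hp)
    by_contra hnR
    have : h ∈ T := Finset.mem_filter.2 ⟨Finset.mem_univ _, hpos, hnR⟩
    rw [hTempty] at this
    exact absurd this (Finset.notMem_empty h)

end Reach
section Main
variable {n m : ℕ} {v : Fin n → Fin m → ℝ} {p : Fin m → ℝ} {μ : Fin n → Option (Fin m)}
  {s : Fin m → ℕ}

lemma mem_l2 (hWE : IsWEU s v p μ) (hmin : IsMinimalWEPriceU s v p) (hgen : GenericU v)
    {g : Fin m} {o2 : Option (Fin m)} {l2 : List (Step n m)}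
    (hP2 : Pf p o2 = 0) (hWF2 : WF v p μ o2 (some g) l2) (hnd2 : (nodes o2 l2).Nodup)
    (q : Fin n) (hμq : μ q ≠ some g) (hdq : some g ∈ DemU (v q) p) :
    (q, μ q, g) ∈ l2 := by
  classical
  obtain ⟨o1, l1, hP1, hWF1, hnd1⟩ :
      ∃ o1 l1, Pf p o1 = 0 ∧ WF v p μ o1 (μ q) l1 ∧ (nodes o1 l1).Nodup := by
    cases hμ : μ q with
    | none => exact ⟨none, [], rfl, rfl, by simp [nodes]⟩
    | some h => exact reach hWE hmin h
  set σ1 : List (Step n m) := l1 ++ [(q, μ q, g)] with hσ1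
  have hWFσ1 : WF v p μ o1 (some g) σ1 := WF_append hWF1 ⟨rfl, rfl, hdq, hμq, rfl⟩
  have hsrc1 : sources l1 ++ [μ q] = nodes o1 l1 := sources_append_eq_nodes hWF1
  have hsrcσ1 : sources σ1 = sources l1 ++ [μ q] := by simp [sources, hσ1]
  have hndσ1 : (sources σ1).Nodup := by rw [hsrcσ1, hsrc1]; exact hnd1
  have hμnotin : μ q ∉ sources l1 := by
    have : (sources l1 ++ [μ q]).Nodup := by rw [hsrc1]; exact hnd1
    intro hmem
    exact List.disjoint_of_nodup_append this hmem (by simp)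
  have hnd2src : (sources l2).Nodup := by
    have h2 := sources_append_eq_nodes hWF2
    have : (sources l2 ++ [some g]).Nodup := by rw [h2]; exact hnd2
    exact this.of_append_left
  set α : Fin n → Fin m → ℤ := fun q' g' => coef σ1 q' g' - coef l2 q' g' with hα
  have hsum : (∑ q', ∑ g', (α q' g' : ℝ) * v q' g') = 0 := by
    have e1 := sum_coef hWE.2.1 σ1 o1 (some g) hWFσ1
    have e2 := sum_coef hWE.2.1 l2 o2 (some g) hWF2
    have : (∑ q', ∑ g', (α q' g' : ℝ) * v q' g')
        = (∑ q', ∑ g', (coef σ1 q' g' : ℝ) * v q' g')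
          - (∑ q', ∑ g', (coef l2 q' g' : ℝ) * v q' g') := by
      rw [← Finset.sum_sub_distrib]
      refine Finset.sum_congr rfl fun q' _ => ?_
      rw [← Finset.sum_sub_distrib]
      refine Finset.sum_congr rfl fun g' _ => ?_
      rw [hα]; push_cast; ring
    rw [this, e1, e2, hP1, hP2]
    ring
  have hrange : ∀ q' g', α q' g' = -1 ∨ α q' g' = 0 ∨ α q' g' = 1 := by
    intro q' g'
    have hαe : α q' g' = coef σ1 q' g' - coef l2 q' g' := rfl
    rw [hαe]
    rcases coef_struct hWFσ1 hndσ1 q' with h1 | ⟨t1, _, hne1, hf1⟩ <;>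
      rcases coef_struct hWF2 hnd2src q' with h2 | ⟨t2, _, hne2, hf2⟩
    · rw [h1 g', h2 g']; omega
    · rw [h1 g', hf2 g']; split_ifs <;> omega
    · rw [hf1 g', h2 g']; split_ifs <;> omega
    · rw [hf1 g', hf2 g']; split_ifs <;> omega
  have hall0 := hgen α hrange hsum
  have hc1 : coef σ1 q g = 1 := by
    rw [hσ1, coef_append]
    have hz : coef l1 q g = 0 := by
      refine coef_zero (fun st hst he => ?_) g
      apply hμnotin
      have := (WF_facts hWF1 st hst).1
      rw [← he, this] at *
      exact List.mem_map_of_mem hst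
    rw [hz]
    simp [coef, hμq]
  have hc2 : coef l2 q g = 1 := by
    have hz : coef σ1 q g - coef l2 q g = 0 := hall0 q g
    omega
  rcases coef_struct hWF2 hnd2src q with h0 | ⟨t, hmem, hne, hf⟩
  · rw [h0 g] at hc2; omega
  · have := hf g
    rw [hc2] at this
    simp only [hμq, if_false] at this
    by_cases hg : g = t
    · subst hg; exact hmem
    · simp [hg] at this

end Main
end Stmt5Aux

/-- under generic unit-demand valuations, at a minimal Walrasian price
vector `p` with equilibrium allocation `μ`, every node of the swap graph has in-degree
at most one: for each good `g` there is at most one buyer not allocated `g` who demands `g`. -/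
theorem stmt5 (n m : ℕ) (s : Fin m → ℕ) (hs : ∀ g, 1 ≤ s g)
    (v : Fin n → Fin m → ℝ) (hv : ∀ q g, 0 ≤ v q g) (hgen : GenericU v)
    (p : Fin m → ℝ) (μ : Fin n → Option (Fin m))
    (hWE : IsWEU s v p μ) (hmin : IsMinimalWEPriceU s v p) :
    ∀ g : Fin m, ∀ q1 q2 : Fin n,
      μ q1 ≠ some g → some g ∈ DemU (v q1) p →
      μ q2 ≠ some g → some g ∈ DemU (v q2) p → q1 = q2 := by
  intro g q1 q2 hμ1 hd1 hμ2 hd2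
  classical
  obtain ⟨o2, l2, hP2, hWF2, hnd2⟩ := Stmt5Aux.reach hWE hmin g
  have h1 := Stmt5Aux.mem_l2 hWE hmin hgen hP2 hWF2 hnd2 q1 hμ1 hd1
  have h2 := Stmt5Aux.mem_l2 hWE hmin hgen hP2 hWF2 hnd2 q2 hμ2 hd2
  have hmap : (l2.map Stmt5Aux.tgt).Nodup := (List.nodup_cons.1 hnd2).2
  have heq := List.inj_on_of_nodup_map hmap h1 h2 rfl
  exact congrArg Prod.fst heq

end
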